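/- Let h : ℝ → [0,∞) be convex with h(0) = 0 and h(z) → +∞ as |z| → ∞, let T : ℝ → ℝ be convex, continuous, and nondecreasing, and let D be a nonnegative random variable. Let g : ℝ → [0,∞) be continuous and convex with E[g(T(z−D))] < +∞ for every z. If f : ℝ → [0,∞) is continuous with f ≤ g, then the function F(z) = E[f(T(z−D))] is finite and continuous on ℝ. -/
import Mathlib


open Filter Topology Set MeasureTheory

/-- If a continuous nonnegative function `f` is bounded above by a continuous convex nonnegative
function `g` with `E[g(T(z − D))] < ∞` for every `z`, where `T` is convex, continuous and
nondecreasing and `D` is a nonnegative random variable, then `F(z) = E[f(T(z − D))]` is finite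
(i.e. the integrand is integrable) and continuous on `ℝ`. -/
theorem stmt18 {Ω : Type*} [MeasurableSpace Ω] (μ : Measure Ω) [IsProbabilityMeasure μ]
    (D : Ω → ℝ) (hD : Measurable D) (hDnn : ∀ ω, 0 ≤ D ω)
    (h : ℝ → ℝ) (hhcvx : ConvexOn ℝ Set.univ h) (hh0 : h 0 = 0) (hhnn : ∀ z, 0 ≤ h z)
    (hhtop : Tendsto h atTop atTop) (hhbot : Tendsto h atBot atTop)
    (T : ℝ → ℝ) (hTcvx : ConvexOn ℝ Set.univ T) (hTc : Continuous T) (hTm : Monotone T)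
    (g : ℝ → ℝ) (hgc : Continuous g) (hgcvx : ConvexOn ℝ Set.univ g) (hgnn : ∀ z, 0 ≤ g z)
    (hgint : ∀ z : ℝ, Integrable (fun ω => g (T (z - D ω))) μ)
    (f : ℝ → ℝ) (hfc : Continuous f) (hfnn : ∀ z, 0 ≤ f z) (hfg : ∀ z, f z ≤ g z) :
    (∀ z : ℝ, Integrable (fun ω => f (T (z - D ω))) μ) ∧
    Continuous (fun z : ℝ => ∫ ω, f (T (z - D ω)) ∂μ) := by
  have hmeas : ∀ z : ℝ, AEStronglyMeasurable (fun ω => f (T (z - D ω))) μ := fun z =>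
    ((hfc.comp hTc).comp (continuous_const.sub continuous_id)).measurable.comp hD
      |>.aestronglyMeasurable
  have hint : ∀ z : ℝ, Integrable (fun ω => f (T (z - D ω))) μ := by
    intro z
    refine (hgint z).mono (hmeas z) ?_
    filter_upwards with ω
    rw [Real.norm_eq_abs, Real.norm_eq_abs, abs_of_nonneg (hfnn _), abs_of_nonneg (hgnn _)]
    exact hfg _
  refine ⟨hint, ?_⟩
  rw [continuous_iff_continuousAt]
  intro z₀
  refine continuousAt_of_dominated (F := fun z ω => f (T (z - D ω)))
    (bound := fun ω => g (T (z₀ - 1 - D ω)) + g (T (z₀ + 1 - D ω)))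
    (Filter.Eventually.of_forall fun z => hmeas z) ?_ ((hgint _).add (hgint _)) ?_
  · filter_upwards [Icc_mem_nhds (a := z₀ - 1) (b := z₀ + 1) (by linarith) (by linarith)]
      with z hz
    filter_upwards with ω
    rw [Real.norm_eq_abs, abs_of_nonneg (hfnn _)]
    have h1 : T (z₀ - 1 - D ω) ≤ T (z - D ω) := hTm (by have := hz.1; linarith)
    have h2 : T (z - D ω) ≤ T (z₀ + 1 - D ω) := hTm (by have := hz.2; linarith)
    have hseg : T (z - D ω) ∈ segment ℝ (T (z₀ - 1 - D ω)) (T (z₀ + 1 - D ω)) := by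
      rw [segment_eq_Icc (h1.trans h2)]
      exact ⟨h1, h2⟩
    have := hgcvx.le_on_segment (mem_univ _) (mem_univ _) hseg
    calc f (T (z - D ω)) ≤ g (T (z - D ω)) := hfg _
      _ ≤ max (g (T (z₀ - 1 - D ω))) (g (T (z₀ + 1 - D ω))) := this
      _ ≤ _ := max_le (le_add_of_nonneg_right (hgnn _)) (le_add_of_nonneg_left (hgnn _))
  · filter_upwards with ω
    exact ((hfc.comp hTc).comp (continuous_id.sub continuous_const)).continuousAt
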